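/- (Lambert) Let X be a complex Banach space and 𝔄 a transitive subalgebra of L(X) that possesses a strictly cyclic vector. Then 𝔄 is dense in L(X) in the weak operator topology. -/

import Mathlib

open Filter Topology

section Lambert

variable {X : Type*} [NormedAddCommGroup X] [NormedSpace ℂ X] [CompleteSpace X]

set_option synthInstance.maxHeartbeats 1000000 in
/-- Open mapping constant for the strictly cyclic vector. -/
lemma lam_open (S : NonUnitalSubalgebra ℂ (X →L[ℂ] X)) (hS : IsClosed (S : Set (X →L[ℂ] X)))
    (x₀ : X) (hsc : ∀ y : X, ∃ A ∈ S, A x₀ = y) :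
    ∃ K : ℝ, 0 < K ∧ ∀ z : X, ∃ A : X →L[ℂ] X, A ∈ S ∧ A x₀ = z ∧ ‖A‖ ≤ K * ‖z‖ := by
  haveI : CompleteSpace S.toSubmodule := by
    have h : IsClosed (S.toSubmodule : Set (X →L[ℂ] X)) := hS
    exact h.completeSpace_coe
  set θ : S.toSubmodule →L[ℂ] X :=
    (ContinuousLinearMap.apply ℂ X x₀).comp S.toSubmodule.subtypeL with hθ
  have hsurj : Function.Surjective θ := by
    intro z
    obtain ⟨A, hA, hAz⟩ := hsc z
    exact ⟨⟨A, hA⟩, hAz⟩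
  obtain ⟨C, hC, h⟩ := θ.exists_preimage_norm_le (σ' := RingHom.id ℂ) (σ := RingHom.id ℂ) (E := S.toSubmodule) (F := X) hsurj
  refine ⟨C, hC, fun z => ?_⟩
  obtain ⟨a, ha, hnorm⟩ := h z
  exact ⟨(a : X →L[ℂ] X), a.2, ha, hnorm⟩

/-- Perturbation: every vector near `x₀` is strictly cyclic. -/
lemma lam_perturb (S : NonUnitalSubalgebra ℂ (X →L[ℂ] X)) (hS : IsClosed (S : Set (X →L[ℂ] X)))
    (x₀ : X) (K : ℝ) (hK0 : 0 < K)
    (h : ∀ z : X, ∃ A : X →L[ℂ] X, A ∈ S ∧ A x₀ = z ∧ ‖A‖ ≤ K * ‖z‖)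
    (y : X) (hy : ‖y - x₀‖ ≤ 1 / (2 * K)) (z : X) : ∃ A ∈ S, A y = z := by
  choose c hcS hcx₀ hcn using h
  set r : ℕ → X := fun n => Nat.rec (motive := fun _ => X) z (fun _ w => (c w) (x₀ - y)) n with hr
  have hr0 : r 0 = z := rfl
  have hrsucc : ∀ n, r (n + 1) = (c (r n)) (x₀ - y) := fun n => rfl
  have hhalf : ∀ n, ‖r (n + 1)‖ ≤ (1 / 2) * ‖r n‖ := by
    intro n
    rw [hrsucc]
    calc ‖(c (r n)) (x₀ - y)‖ ≤ ‖c (r n)‖ * ‖x₀ - y‖ := (c (r n)).le_opNorm _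
    _ ≤ (K * ‖r n‖) * (1 / (2 * K)) := by
        apply mul_le_mul (hcn _) (by rwa [norm_sub_rev] at hy) (norm_nonneg _)
        positivity
    _ = (1 / 2) * ‖r n‖ := by field_simp
  have hgeom : ∀ n, ‖r n‖ ≤ (1 / 2) ^ n * ‖z‖ := by
    intro n; induction n with
    | zero => simp [hr0]
    | succ n ih =>
      calc ‖r (n + 1)‖ ≤ (1 / 2) * ‖r n‖ := hhalf n
      _ ≤ (1 / 2) * ((1 / 2) ^ n * ‖z‖) := by
          apply mul_le_mul_of_nonneg_left ih (by norm_num)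
      _ = (1 / 2) ^ (n + 1) * ‖z‖ := by ring
  have hbnd : ∀ n, ‖c (r n)‖ ≤ (K * ‖z‖) * (1 / 2) ^ n := by
    intro n
    calc ‖c (r n)‖ ≤ K * ‖r n‖ := hcn _
    _ ≤ K * ((1 / 2) ^ n * ‖z‖) := mul_le_mul_of_nonneg_left (hgeom n) hK0.le
    _ = (K * ‖z‖) * (1 / 2) ^ n := by ring
  have hgb : Summable (fun n : ℕ => (K * ‖z‖) * (1 / 2) ^ n) :=
    (summable_geometric_of_lt_one (by norm_num) (by norm_num)).mul_left _
  have hsum : Summable fun n => c (r n) :=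
    Summable.of_norm (Summable.of_nonneg_of_le (fun n => norm_nonneg _) hbnd hgb)
  set A : X →L[ℂ] X := ∑' n, c (r n) with hA
  have hAS : A ∈ S := by
    have hmem : ∀ n, ∑ i ∈ Finset.range n, c (r i) ∈ S.toSubmodule :=
      fun n => sum_mem (fun i _ => hcS _)
    exact hS.mem_of_tendsto hsum.hasSum.tendsto_sum_nat
      (Filter.Eventually.of_forall fun n => hmem n)
  have hAy : HasSum (fun n => (c (r n)) y) (A y) :=
    hsum.hasSum.mapL (ContinuousLinearMap.apply ℂ X y)
  have htel : ∀ n, (c (r n)) y = r n - r (n + 1) := by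
    intro n
    have h1 : (c (r n)) y = (c (r n)) x₀ - (c (r n)) (x₀ - y) := by
      rw [map_sub]; abel
    rw [h1, hcx₀, hrsucc]
  have hrz : Tendsto r atTop (𝓝 0) := by
    rw [tendsto_zero_iff_norm_tendsto_zero]
    apply squeeze_zero (fun n => norm_nonneg _) hgeom
    have := (tendsto_pow_atTop_nhds_zero_of_lt_one (by norm_num : (0:ℝ) ≤ 1/2)
      (by norm_num)).mul_const ‖z‖
    simpa using this
  have hpart : Tendsto (fun n => ∑ i ∈ Finset.range n, ((c (r i)) y)) atTop (𝓝 z) := by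
    have heq : ∀ n, ∑ i ∈ Finset.range n, ((c (r i)) y) = z - r n := by
      intro n
      simp only [htel]
      rw [Finset.sum_range_sub' r, hr0]
    simp only [heq]
    simpa using tendsto_const_nhds.sub hrz
  have : A y = z := tendsto_nhds_unique hAy.tendsto_sum_nat hpart
  exact ⟨A, hAS, this⟩

/-- Strict transitivity. -/
lemma lam_strict (S : NonUnitalSubalgebra ℂ (X →L[ℂ] X)) (hS : IsClosed (S : Set (X →L[ℂ] X)))
    (x₀ : X) (htr : ∀ x : X, x ≠ 0 → Dense {y : X | ∃ A ∈ S, A x = y})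
    (K : ℝ) (hK0 : 0 < K)
    (h : ∀ z : X, ∃ A : X →L[ℂ] X, A ∈ S ∧ A x₀ = z ∧ ‖A‖ ≤ K * ‖z‖) :
    ∀ x : X, x ≠ 0 → ∀ z : X, ∃ A ∈ S, A x = z := by
  intro x hx z
  have hδ : (0:ℝ) < 1 / (2 * K) := by positivity
  have hball : (Metric.ball x₀ (1 / (2 * K))).Nonempty := ⟨x₀, Metric.mem_ball_self hδ⟩
  obtain ⟨y, hy1, hy2⟩ := (htr x hx).exists_mem_open Metric.isOpen_ball hball
  obtain ⟨A₁, hA₁S, hA₁⟩ := hy1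
  have hle : ‖y - x₀‖ ≤ 1 / (2 * K) :=
    le_of_lt (by simpa [Metric.mem_ball, dist_eq_norm] using hy2)
  obtain ⟨B, hBS, hBy⟩ := lam_perturb S hS x₀ K hK0 h y hle z
  exact ⟨B * A₁, mul_mem hBS hA₁S, by
    rw [ContinuousLinearMap.mul_apply, hA₁, hBy]⟩

/-- The commutant of a strictly transitive, strictly cyclic algebra is scalar. -/
lemma lam_commutant [Nontrivial X] (S : NonUnitalSubalgebra ℂ (X →L[ℂ] X))
    (x₀ : X) (hx₀ : x₀ ≠ 0) (K : ℝ)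
    (hK : ∀ z : X, ∃ A : X →L[ℂ] X, A ∈ S ∧ A x₀ = z ∧ ‖A‖ ≤ K * ‖z‖)
    (hstrict : ∀ x : X, x ≠ 0 → ∀ z : X, ∃ A ∈ S, A x = z)
    (B : X →ₗ[ℂ] X) (hB : ∀ A ∈ S, ∀ u, B (A u) = A (B u)) :
    ∃ c : ℂ, ∀ u, B u = c • u := by
  have hbound : ∀ u, ‖B u‖ ≤ (K * ‖B x₀‖) * ‖u‖ := by
    intro u
    obtain ⟨A, hA, hAx, hAn⟩ := hK u
    have h1 : B u = A (B x₀) := by rw [← hAx, hB A hA]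
    rw [h1]
    calc ‖A (B x₀)‖ ≤ ‖A‖ * ‖B x₀‖ := A.le_opNorm _
    _ ≤ (K * ‖u‖) * ‖B x₀‖ := mul_le_mul_of_nonneg_right hAn (norm_nonneg _)
    _ = (K * ‖B x₀‖) * ‖u‖ := by ring
  set B' : X →L[ℂ] X := B.mkContinuous (K * ‖B x₀‖) hbound with hB'def
  have hB'app : ∀ u, B' u = B u := fun u => rfl
  haveI : Nontrivial (X →L[ℂ] X) := by
    obtain ⟨v, hv⟩ := exists_ne (0 : X)
    exact ⟨1, 0, fun hcon => hv (by simpa using DFunLike.congr_fun hcon v)⟩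
  obtain ⟨lam, hlam⟩ := spectrum.nonempty B'
  rw [spectrum.mem_iff] at hlam
  set C : X →L[ℂ] X := algebraMap ℂ (X →L[ℂ] X) lam - B' with hCdef
  have hCapp : ∀ u, C u = lam • u - B u := by
    intro u
    rw [hCdef, ContinuousLinearMap.sub_apply, hB'app, Algebra.algebraMap_eq_smul_one,
      ContinuousLinearMap.smul_apply, ContinuousLinearMap.one_apply]
  have hCcomm : ∀ A ∈ S, ∀ u, C (A u) = A (C u) := by
    intro A hA u
    rw [hCapp, hCapp, map_sub, map_smul, hB A hA]
  by_cases hinj : Function.Injective C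
  · exfalso
    apply hlam
    rw [ContinuousLinearMap.isUnit_iff_bijective]
    refine ⟨hinj, fun z => ?_⟩
    have hCx₀ : C x₀ ≠ 0 := fun hcon => hx₀ (hinj (by rw [hcon, map_zero]))
    obtain ⟨A, hA, hAz⟩ := hstrict (C x₀) hCx₀ z
    exact ⟨A x₀, (hCcomm A hA x₀).trans hAz⟩
  · have hker : ∃ u, u ≠ 0 ∧ C u = 0 := by
      rw [Function.not_injective_iff] at hinj
      obtain ⟨a, b, hab, hne⟩ := hinj
      exact ⟨a - b, sub_ne_zero.mpr hne, by rw [map_sub, hab, sub_self]⟩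
    obtain ⟨u, hu, hCu⟩ := hker
    refine ⟨lam, fun v => ?_⟩
    obtain ⟨A, hA, hAv⟩ := hstrict u hu v
    have h0 : C v = 0 := by rw [← hAv, hCcomm A hA, hCu, map_zero]
    have h2 : lam • v - B v = 0 := by rw [← hCapp v]; exact h0
    exact (sub_eq_zero.mp h2).symm

/-- Strict n-fold transitivity. -/
lemma lam_ntrans [Nontrivial X] (S : NonUnitalSubalgebra ℂ (X →L[ℂ] X))
    (x₀ : X) (hx₀ : x₀ ≠ 0) (K : ℝ)
    (hK : ∀ z : X, ∃ A : X →L[ℂ] X, A ∈ S ∧ A x₀ = z ∧ ‖A‖ ≤ K * ‖z‖)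
    (hstrict : ∀ x : X, x ≠ 0 → ∀ z : X, ∃ A ∈ S, A x = z) :
    ∀ (m : ℕ) (x : Fin m → X), LinearIndependent ℂ x →
      ∀ y : Fin m → X, ∃ A ∈ S, ∀ i, A (x i) = y i := by
  intro m
  induction m with
  | zero => exact fun x _ y => ⟨0, zero_mem S, fun i => i.elim0⟩
  | succ m IH =>
    intro x hx y
    set x' : Fin m → X := fun j => x (Fin.castSucc j) with hx'def
    have hx' : LinearIndependent ℂ x' := hx.comp Fin.castSucc (Fin.castSucc_injective m)
    set xl : X := x (Fin.last m) with hxldef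
    have key : ∃ A₀, A₀ ∈ S ∧ (∀ i, A₀ (x' i) = 0) ∧ A₀ xl ≠ 0 := by
      by_contra hbad
      push_neg at hbad
      have huniq : ∀ A ∈ S, ∀ A' ∈ S, (∀ i, A (x' i) = A' (x' i)) → A xl = A' xl := by
        intro A hA A' hA' he
        have h0 := hbad (A - A') (sub_mem hA hA') (fun i => by
          rw [ContinuousLinearMap.sub_apply, he i, sub_self])
        rw [ContinuousLinearMap.sub_apply, sub_eq_zero] at h0
        exact h0
      have hsingle_add : ∀ (j i : Fin m) (u v : X),
          Pi.single (M := fun _ => X) j (u + v) i = Pi.single (M := fun _ => X) j u i + Pi.single (M := fun _ => X) j v i := by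
        intro j i u v
        rcases eq_or_ne i j with rfl | hne
        · simp
        · simp [Pi.single_eq_of_ne hne]
      have hsingle_smul : ∀ (j i : Fin m) (a : ℂ) (u : X),
          Pi.single (M := fun _ => X) j (a • u) i = a • Pi.single (M := fun _ => X) j u i := by
        intro j i a u
        rcases eq_or_ne i j with rfl | hne
        · simp
        · simp [Pi.single_eq_of_ne hne]
      have hex := fun (j : Fin m) (u : X) => IH x' hx' (Pi.single j u)
      choose D hDS hD using hex
      have hcomm : ∀ (j : Fin m), ∀ A ∈ S, ∀ u, D j (A u) xl = A (D j u xl) := by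
        intro j A hA u
        have h1 : ∀ i, (A * D j u) (x' i) = Pi.single (M := fun _ => X) j (A u) i := by
          intro i
          rw [ContinuousLinearMap.mul_apply, hD j u i]
          by_cases hij : i = j
          · subst hij; rw [Pi.single_eq_same, Pi.single_eq_same]
          · rw [Pi.single_eq_of_ne hij, Pi.single_eq_of_ne hij, map_zero]
        have h2 := huniq (D j (A u)) (hDS _ _) (A * D j u) (mul_mem hA (hDS _ _))
          (fun i => by rw [hD, h1 i])
        rw [h2, ContinuousLinearMap.mul_apply]
      have hadd : ∀ j (u v : X), D j (u + v) xl = D j u xl + D j v xl := by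
        intro j u v
        have h2 := huniq (D j (u + v)) (hDS _ _) (D j u + D j v) (add_mem (hDS _ _) (hDS _ _))
          (fun i => by
            rw [hD, ContinuousLinearMap.add_apply, hD, hD, hsingle_add j i u v])
        rw [h2, ContinuousLinearMap.add_apply]
      have hsmul : ∀ j (a : ℂ) (u : X), D j (a • u) xl = a • D j u xl := by
        intro j a u
        have h2 := huniq (D j (a • u)) (hDS _ _) (a • D j u)
          (SMulMemClass.smul_mem a (hDS _ _))
          (fun i => by
            rw [hD, ContinuousLinearMap.smul_apply, hD, hsingle_smul j i a u])
        rw [h2, ContinuousLinearMap.smul_apply]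
      have hlam : ∀ j : Fin m, ∃ cj : ℂ, ∀ u, D j u xl = cj • u := by
        intro j
        obtain ⟨cj, hcj⟩ := lam_commutant S x₀ hx₀ K hK hstrict
          { toFun := fun u => D j u xl
            map_add' := hadd j
            map_smul' := fun a u => hsmul j a u }
          (fun A hA u => hcomm j A hA u)
        exact ⟨cj, fun u => hcj u⟩
      choose cvec hcvec using hlam
      have hkey : ∀ A ∈ S, A xl = ∑ j, cvec j • A (x' j) := by
        intro A hA
        have hDsum : ∀ i, (∑ j, D j (A (x' j))) (x' i) = A (x' i) := by
          intro i
          rw [ContinuousLinearMap.sum_apply]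
          simp only [hD]
          exact Fintype.sum_pi_single i (fun j => A (x' j))
        have h2 := huniq A hA (∑ j, D j (A (x' j))) (sum_mem (fun j _ => hDS _ _))
          (fun i => (hDsum i).symm)
        rw [h2, ContinuousLinearMap.sum_apply]
        exact Finset.sum_congr rfl (fun j _ => hcvec j (A (x' j)))
      have hw0 : xl - ∑ j, cvec j • x' j = 0 := by
        by_contra hwne
        obtain ⟨A, hA, hAw⟩ := hstrict _ hwne x₀
        apply hx₀
        rw [← hAw, map_sub, map_sum]
        simp only [map_smul]
        rw [hkey A hA, sub_self]
      have hsum0 : ∑ i : Fin (m + 1), (Fin.snoc (fun j => cvec j) (-1 : ℂ) : Fin (m + 1) → ℂ) i • x i = 0 := by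
        rw [Fin.sum_univ_castSucc]
        simp only [Fin.snoc_castSucc, Fin.snoc_last]
        rw [neg_one_smul]
        rw [sub_eq_zero] at hw0
        rw [← hxldef, ← hw0]
        simp [hx'def]
      have hg := Fintype.linearIndependent_iff.mp hx _ hsum0 (Fin.last m)
      rw [Fin.snoc_last] at hg
      exact (by norm_num : (-1 : ℂ) ≠ 0) hg
    obtain ⟨A₀, hA₀S, hA₀z, hA₀l⟩ := key
    obtain ⟨A', hA'S, hA'⟩ := IH x' hx' (fun j => y (Fin.castSucc j))
    obtain ⟨C, hCS, hC⟩ := hstrict (A₀ xl) hA₀l (y (Fin.last m) - A' xl)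
    refine ⟨A' + C * A₀, add_mem hA'S (mul_mem hCS hA₀S), fun i => ?_⟩
    refine Fin.lastCases ?_ (fun j => ?_) i
    · rw [ContinuousLinearMap.add_apply, ContinuousLinearMap.mul_apply, ← hxldef, hC]
      abel
    · rw [ContinuousLinearMap.add_apply, ContinuousLinearMap.mul_apply]
      have e1 : x (Fin.castSucc j) = x' j := rfl
      rw [e1, hA₀z j, map_zero, add_zero]
      exact hA' j

end Lambert

/-- **(Lambert)** Let `X` be a complex Banach space and `𝔄` a transitive subalgebra of
`L(X)` possessing a strictly cyclic vector.  Then `𝔄` is WOT-dense in `L(X)`: for every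
`T ∈ L(X)`, `ε > 0`, and finite families `x₁,…,x_m ∈ X`, `f₁,…,f_m ∈ X*` there is
`A ∈ 𝔄` with `|fᵢ(T xᵢ − A xᵢ)| < ε` for all `i`. -/
theorem stmt_3 {X : Type*} [NormedAddCommGroup X] [NormedSpace ℂ X] [CompleteSpace X]
    (𝔄 : NonUnitalSubalgebra ℂ (X →L[ℂ] X))
    (htrans : ∀ x : X, x ≠ 0 → Dense {y : X | ∃ A ∈ 𝔄, A x = y})
    (x₀ : X) (hsc : ∀ y : X, ∃ A ∈ 𝔄, A x₀ = y) :
    ∀ (T : X →L[ℂ] X) (ε : ℝ), 0 < ε →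
      ∀ (m : ℕ) (x : Fin m → X) (f : Fin m → (X →L[ℂ] ℂ)),
        ∃ A ∈ 𝔄, ∀ i, ‖f i (T (x i) - A (x i))‖ < ε := by
  intro T ε hε m x f
  rcases subsingleton_or_nontrivial X with hsub | hnt
  · refine ⟨0, zero_mem 𝔄, fun i => ?_⟩
    have h0 : T (x i) - (0 : X →L[ℂ] X) (x i) = 0 := Subsingleton.elim _ _
    rw [h0, map_zero, norm_zero]; exact hε
  · set S := 𝔄.topologicalClosure with hSdef
    have hSle := 𝔄.le_topologicalClosure
    have hS : IsClosed (S : Set (X →L[ℂ] X)) := 𝔄.isClosed_topologicalClosure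
    have hx₀ : x₀ ≠ 0 := by
      rintro rfl
      obtain ⟨a, b, hab⟩ := exists_pair_ne X
      obtain ⟨A, _, hA⟩ := hsc a
      obtain ⟨B, _, hB⟩ := hsc b
      exact hab (by rw [← hA, ← hB, map_zero, map_zero])
    have hscS : ∀ y : X, ∃ A ∈ S, A x₀ = y := by
      intro y; obtain ⟨A, h1, h2⟩ := hsc y; exact ⟨A, hSle h1, h2⟩
    have htrS : ∀ v : X, v ≠ 0 → Dense {y : X | ∃ A ∈ S, A v = y} := by
      intro v hv
      apply (htrans v hv).mono
      rintro y ⟨A, h1, h2⟩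
      exact ⟨A, hSle h1, h2⟩
    obtain ⟨K, hK0, hK⟩ := lam_open S hS x₀ hscS
    have hstrict := lam_strict S hS x₀ htrS K hK0 hK
    have hnt' := lam_ntrans S x₀ hx₀ K hK hstrict
    haveI hfin : FiniteDimensional ℂ (Submodule.span ℂ (Set.range x)) :=
      FiniteDimensional.span_of_finite ℂ (Set.finite_range x)
    set W := Submodule.span ℂ (Set.range x) with hWdef
    let b := Module.finBasis ℂ W
    have hlib : LinearIndependent ℂ (fun j => ((b j : W) : X)) :=
      b.linearIndependent.map' W.subtype (Submodule.ker_subtype W)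
    obtain ⟨A, hAS, hAb⟩ := hnt' _ _ hlib (fun j => T ((b j : W) : X))
    have hAW : ∀ w : W, A (w : X) = T (w : X) := by
      have hcomp : A.toLinearMap.comp W.subtype = T.toLinearMap.comp W.subtype :=
        b.ext (fun j => hAb j)
      intro w
      exact DFunLike.congr_fun hcomp w
    have hAx : ∀ i, A (x i) = T (x i) := fun i =>
      hAW ⟨x i, Submodule.subset_span (Set.mem_range_self i)⟩
    set Cb : ℝ := ∑ i, ‖f i‖ * ‖x i‖ with hCbdef
    have hCb0 : 0 ≤ Cb :=
      Finset.sum_nonneg (fun i _ => mul_nonneg (norm_nonneg _) (norm_nonneg _))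
    have hδ : 0 < ε / (1 + Cb) := div_pos hε (by linarith)
    have hAcl : A ∈ closure (𝔄 : Set (X →L[ℂ] X)) := hAS
    obtain ⟨A', hA'mem, hA'dist⟩ := Metric.mem_closure_iff.mp hAcl _ hδ
    refine ⟨A', hA'mem, fun i => ?_⟩
    have h1 : T (x i) - A' (x i) = (A - A') (x i) := by
      rw [ContinuousLinearMap.sub_apply, hAx i]
    rw [h1]
    calc ‖f i ((A - A') (x i))‖ ≤ ‖f i‖ * ‖(A - A') (x i)‖ := (f i).le_opNorm _
    _ ≤ ‖f i‖ * (‖A - A'‖ * ‖x i‖) :=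
        mul_le_mul_of_nonneg_left ((A - A').le_opNorm _) (norm_nonneg _)
    _ = (‖f i‖ * ‖x i‖) * ‖A - A'‖ := by ring
    _ ≤ (1 + Cb) * ‖A - A'‖ := by
        apply mul_le_mul_of_nonneg_right ?_ (norm_nonneg _)
        have hle : ‖f i‖ * ‖x i‖ ≤ Cb :=
          Finset.single_le_sum (fun i _ => mul_nonneg (norm_nonneg _) (norm_nonneg _))
            (Finset.mem_univ i)
        linarith
    _ < (1 + Cb) * (ε / (1 + Cb)) := by
        apply mul_lt_mul_of_pos_left ?_ (by linarith)
        rw [dist_eq_norm] at hA'dist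
        exact hA'dist
    _ = ε := by field_simp
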